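/- arXiv:2010.06562 — 2 statements merged into one kernel-verified Lean document; each statement's English description precedes it below -/
import Mathlib

section
/- Let W be an ε-LDP channel from X to Y with densities W(y|x) with respect to μ, and P a distribution on X. Then ∫_Y Var_{P}[W(y|X)] / E_{P}[W(y|X)] dμ(y) ≤ min((e^ε − 1)^2, e^ε). -/
open MeasureTheory ProbabilityTheory

/-- Corollary for LDP constraints: the integrated variance-to-mean ratio of the channel
densities is at most `min ((e^ε - 1)^2) (e^ε)`. -/
theorem stmt_3 {X Y : Type*} [MeasurableSpace X] [MeasurableSpace Y]
    (W : Y → X → ℝ) (ε : ℝ) (μ : Measure Y) (P : Measure X) [IsProbabilityMeasure P]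
    (hW_nonneg : ∀ y x, 0 ≤ W y x)
    (hW_meas : Measurable (Function.uncurry W))
    (hW_int : ∀ y, MemLp (W y) 2 P)
    (hW_dens : ∀ x, ∫ y, W y x ∂μ = 1)
    (hLDP : ∀ y x₁ x₂, W y x₁ ≤ Real.exp ε * W y x₂) :
    ∫ y, variance (W y) P / (∫ x, W y x ∂P) ∂μ ≤
      min ((Real.exp ε - 1) ^ 2) (Real.exp ε) := by
  -- X is nonempty since P is a probability measure
  rcases isEmpty_or_nonempty X with hX | hX
  · exfalso
    have h1 : P Set.univ = 1 := measure_univ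
    rw [Set.univ_eq_empty_iff.mpr hX] at h1
    simp at h1
  obtain ⟨x₀⟩ := hX
  -- ε < 0 is contradictory
  rcases lt_or_ge ε 0 with hε | hε
  · exfalso
    have h0 : ∀ y, W y x₀ = 0 := by
      intro y
      have h1 := hLDP y x₀ x₀
      have h2 : Real.exp ε < 1 := Real.exp_lt_one_iff.mpr hε
      nlinarith [hW_nonneg y x₀]
    have h3 := hW_dens x₀
    simp only [h0] at h3
    simp at h3
  set e := Real.exp ε with he
  have he1 : 1 ≤ e := Real.one_le_exp hε
  have he0 : 0 < e := Real.exp_pos ε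
  set K := min ((e - 1) ^ 2) e with hK
  have hK0 : 0 ≤ K := le_min (by positivity) he0.le
  have hInt0 : Integrable (fun y => W y x₀) μ := by
    by_contra h
    have h3 := hW_dens x₀
    rw [integral_undef h] at h3
    norm_num at h3
  have key : ∀ y, variance (W y) P / (∫ x, W y x ∂P) ≤ K * W y x₀ := by
    intro y
    set m := ∫ x, W y x ∂P with hm
    set w0 := W y x₀ with hw0
    have hw00 : 0 ≤ w0 := hW_nonneg y x₀
    have hZint : Integrable (W y) P := (hW_int y).integrable one_le_two
    have hZ2int : Integrable (fun x => W y x ^ 2) P := by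
      have := (hW_int y).integrable_sq
      simpa [sq] using this
    have hm0 : 0 ≤ m := integral_nonneg (hW_nonneg y)
    have hub : ∀ x, W y x ≤ e * m := by
      intro x
      have h1 : ∀ x₂, W y x ≤ e * W y x₂ := fun x₂ => hLDP y x x₂
      calc W y x = ∫ _, W y x ∂P := by simp
        _ ≤ ∫ x₂, e * W y x₂ ∂P :=
            integral_mono (integrable_const _) (hZint.const_mul e) h1
        _ = e * m := by rw [integral_const_mul]
    set a := e⁻¹ * m with ha
    have heinv : e⁻¹ * e = 1 := inv_mul_cancel₀ he0.ne'
    have hlb : ∀ x, a ≤ W y x := by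
      intro x
      have h1 : ∀ x₂, e⁻¹ * W y x₂ ≤ W y x := by
        intro x₂
        rw [inv_mul_le_iff₀ he0]
        exact hLDP y x₂ x
      calc a = ∫ x₂, e⁻¹ * W y x₂ ∂P := by rw [integral_const_mul]
        _ ≤ ∫ _, W y x ∂P := integral_mono (hZint.const_mul _) (integrable_const _) h1
        _ = W y x := by simp
    have hmw : m ≤ e * w0 := by
      calc m ≤ ∫ _, e * w0 ∂P :=
            integral_mono hZint (integrable_const _) (fun x => hLDP y x x₀)
        _ = e * w0 := by simp
    rcases eq_or_lt_of_le hm0 with hmz | hmz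
    · -- m = 0 forces W y ≡ 0
      have hz : W y = 0 := by
        funext x
        have h1 := hub x
        have h2 := hW_nonneg y x
        simp only [Pi.zero_apply]
        nlinarith
      rw [hz, variance_zero, zero_div]
      positivity
    · -- m > 0
      have hvar : variance (W y) P = (∫ x, W y x ^ 2 ∂P) - m ^ 2 := by
        have := variance_eq_sub (hW_int y)
        simpa [Pi.pow_apply, hm] using this
      set I2 := ∫ x, W y x ^ 2 ∂P with hI2
      -- Bhatia–Davis style bound
      have hBD : I2 ≤ (a + e * m) * m - a * (e * m) := by
        have hnn : 0 ≤ ∫ x, (W y x - a) * (e * m - W y x) ∂P :=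
          integral_nonneg fun x => mul_nonneg (sub_nonneg.2 (hlb x)) (sub_nonneg.2 (hub x))
        have hexp : ∫ x, (W y x - a) * (e * m - W y x) ∂P
            = (a + e * m) * m - I2 - a * (e * m) := by
          have hfun : ∀ x, (W y x - a) * (e * m - W y x)
              = (a + e * m) * W y x - W y x ^ 2 - a * (e * m) := by
            intro x; ring
          have hfint : Integrable (fun x => (a + e * m) * W y x - W y x ^ 2) P :=
            (hZint.const_mul _).sub hZ2int
          rw [integral_congr_ae (ae_of_all _ hfun),
            integral_sub hfint (integrable_const _),
            integral_sub (hZint.const_mul _) hZ2int, integral_const_mul, integral_const]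
          simp [hm, hI2]
        linarith [hexp ▸ hnn]
      -- bound (ii): I2 ≤ e * w0 * m
      have hI2b : I2 ≤ e * w0 * m := by
        have h1 : ∀ x, W y x ^ 2 ≤ (e * w0) * W y x := by
          intro x
          have := hLDP y x x₀
          nlinarith [hW_nonneg y x]
        calc I2 ≤ ∫ x, (e * w0) * W y x ∂P :=
              integral_mono hZ2int (hZint.const_mul _) h1
          _ = e * w0 * m := by rw [integral_const_mul]
      rw [div_le_iff₀ hmz]
      have hb1 : variance (W y) P ≤ (e - 1) ^ 2 * w0 * m := by
        rw [hvar]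
        -- Var ≤ (e*m - m)*(m - a) ≤ (e-1)m * (1 - e⁻¹)m ≤ (e-1)m (e-1)w0 ... via nlinarith
        have h1 : I2 - m ^ 2 ≤ (e * m - m) * (m - a) := by nlinarith [hBD]
        have h2 : m - a ≤ (e - 1) * w0 := by
          have : (1 - e⁻¹) * m ≤ (1 - e⁻¹) * (e * w0) := by
            apply mul_le_mul_of_nonneg_left hmw
            have : e⁻¹ ≤ 1 := by
              rw [inv_le_one_iff₀]; right; exact he1
            linarith
          have h3 : (1 - e⁻¹) * (e * w0) = (e - 1) * w0 := by
            field_simp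
          rw [ha]; nlinarith [this, h3]
        have h3 : (0:ℝ) ≤ (e - 1) * m := by nlinarith
        nlinarith [h1, mul_le_mul_of_nonneg_left h2 h3]
      have hb2 : variance (W y) P ≤ e * w0 * m := by
        rw [hvar]
        nlinarith [hI2b, hmz.le]
      rcases min_choice ((e - 1) ^ 2) e with hmin | hmin <;> rw [hK, hmin]
      · linarith [hb1]
      · linarith [hb2]
  calc ∫ y, variance (W y) P / (∫ x, W y x ∂P) ∂μ
      ≤ ∫ y, K * W y x₀ ∂μ := by
        apply integral_mono_of_nonneg
        · exact ae_of_all _ fun y =>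
            div_nonneg (variance_nonneg _ _) (integral_nonneg (hW_nonneg y))
        · exact hInt0.const_mul K
        · exact ae_of_all _ key
    _ = K * ∫ y, W y x₀ ∂μ := integral_const_mul _ _
    _ = K := by rw [hW_dens x₀, mul_one]
    _ ≤ min ((e - 1) ^ 2) e := le_of_eq hK
end

section
/- Let X ∼ N(μ, I_d) be a d-dimensional Gaussian with mean μ ∈ [−1,1]^d, and let ν ∈ ℝ^d be defined by ν_i = 2·P(X_i > 0) − 1 = Erf(μ_i/√2). For any estimate ν̂ ∈ [−η, η]^d (with η = Erf(1/√2)), define μ̂_i = √2·Erf⁻¹(ν̂_i). Then for every p ∈ [1,∞), ‖μ − μ̂‖_p ≤ √(eπ/2)·‖ν − ν̂‖_p. -/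
open MeasureTheory intervalIntegral

noncomputable def erf (x : ℝ) : ℝ :=
  (2 / Real.sqrt Real.pi) * ∫ t in (0 : ℝ)..x, Real.exp (-t ^ 2)

lemma gauss_cont : Continuous fun t : ℝ => Real.exp (-t ^ 2) := by
  continuity

lemma erf_hasDerivAt (x : ℝ) :
    HasDerivAt erf (2 / Real.sqrt Real.pi * Real.exp (-x ^ 2)) x := by
  have h : HasDerivAt (fun u => ∫ t in (0:ℝ)..u, Real.exp (-t ^ 2)) (Real.exp (-x ^ 2)) x :=
    integral_hasDerivAt_right (gauss_cont.intervalIntegrable _ _)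
      (gauss_cont.aestronglyMeasurable.stronglyMeasurableAtFilter) gauss_cont.continuousAt
  exact h.const_mul _

lemma erf_strictMono : StrictMono erf := by
  apply strictMono_of_deriv_pos
  intro x
  rw [(erf_hasDerivAt x).deriv]
  positivity

lemma erf_diff (x : ℝ) : Differentiable ℝ erf := fun t => (erf_hasDerivAt t).differentiableAt

lemma key (x y : ℝ) (hx : |x| ≤ 1 / Real.sqrt 2) (hy : |y| ≤ 1 / Real.sqrt 2) :
    (2 / Real.sqrt Real.pi * Real.exp (-(1/2))) * |x - y| ≤ |erf x - erf y| := by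
  wlog h : x ≤ y generalizing x y
  · have := this y x hy hx (le_of_not_ge h)
    rwa [abs_sub_comm, abs_sub_comm (erf y)] at this
  set s := 1 / Real.sqrt 2 with hs
  set c := 2 / Real.sqrt Real.pi * Real.exp (-(1/2)) with hc
  have hs2 : s ^ 2 = 1 / 2 := by
    rw [hs, div_pow, one_pow, Real.sq_sqrt (by norm_num)]
  have mono : MonotoneOn (fun t => erf t - c * t) (Set.Icc (-s) s) := by
    apply monotoneOn_of_deriv_nonneg (convex_Icc _ _)
    · exact ((erf_diff 0).sub ((differentiable_id.const_mul c))).continuous.continuousOn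
    · exact ((erf_diff 0).sub ((differentiable_id.const_mul c))).differentiableOn
    · intro t ht
      rw [interior_Icc] at ht
      have hd : HasDerivAt (fun t => erf t - c * t)
          (2 / Real.sqrt Real.pi * Real.exp (-t ^ 2) - c * 1) t :=
        (erf_hasDerivAt t).sub ((hasDerivAt_id t).const_mul c)
      rw [hd.deriv, mul_one, hc, sub_nonneg]
      have ht2 : t ^ 2 ≤ 1 / 2 := by
        rw [← hs2]
        calc t ^ 2 = |t| ^ 2 := (sq_abs t).symm
          _ ≤ s ^ 2 := by
              apply pow_le_pow_left₀ (abs_nonneg t)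
              exact abs_le.2 ⟨ht.1.le, ht.2.le⟩
      have h1 : Real.exp (-(1/2)) ≤ Real.exp (-t ^ 2) := Real.exp_le_exp.2 (by linarith)
      have h2 : (0:ℝ) ≤ 2 / Real.sqrt Real.pi := by positivity
      exact mul_le_mul_of_nonneg_left h1 h2
  have hxm : x ∈ Set.Icc (-s) s := abs_le.1 hx |>.imp id id |> fun h => ⟨h.1, h.2⟩
  have hym : y ∈ Set.Icc (-s) s := abs_le.1 hy |>.imp id id |> fun h => ⟨h.1, h.2⟩
  have hg := mono hxm hym h
  simp only [sub_le_sub_iff] at hg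
  have hmono : erf x ≤ erf y := erf_strictMono.monotone h
  rw [abs_of_nonpos (by linarith), abs_of_nonpos (by linarith : erf x - erf y ≤ 0)]
  nlinarith

lemma erf_neg (x : ℝ) : erf (-x) = -erf x := by
  unfold erf
  rw [← mul_neg]
  congr 1
  have : (∫ t in (0:ℝ)..(-x), Real.exp (-t ^ 2)) = ∫ t in (0:ℝ)..(-x), Real.exp (-(-t) ^ 2) := by
    simp
  rw [this, intervalIntegral.integral_comp_neg (fun t => Real.exp (-t ^ 2)), neg_zero,
    intervalIntegral.integral_symm, neg_neg]

lemma abs_le_of_erf (z s : ℝ) (h : |erf z| ≤ erf s) : |z| ≤ s := by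
  rcases abs_le.1 h with ⟨h1, h2⟩
  rw [← erf_neg] at h1
  exact abs_le.2 ⟨erf_strictMono.le_iff_le.1 h1, erf_strictMono.le_iff_le.1 h2⟩

lemma const_eq : Real.sqrt (Real.exp 1 * Real.pi / 2) *
    (2 / Real.sqrt Real.pi * Real.exp (-(1/2))) = Real.sqrt 2 := by
  have hpi : (0:ℝ) < Real.sqrt Real.pi := Real.sqrt_pos.2 Real.pi_pos
  have hr2 : (0:ℝ) < Real.sqrt 2 := Real.sqrt_pos.2 (by norm_num)
  have h2 : Real.sqrt 2 * Real.sqrt 2 = 2 := Real.mul_self_sqrt (by norm_num)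
  have hsq : Real.sqrt (Real.exp 1 * Real.pi / 2)
      = Real.exp (1/2) * Real.sqrt Real.pi / Real.sqrt 2 := by
    rw [div_eq_mul_inv, Real.sqrt_mul (by positivity), Real.sqrt_mul (Real.exp_pos 1).le,
      Real.sqrt_inv, ← Real.exp_half]
    ring
  have he : Real.exp (1/2) * Real.exp (-(1/2)) = 1 := by
    rw [← Real.exp_add]; norm_num
  rw [hsq]
  field_simp
  nlinarith [he, h2, hpi, hr2]

/-- Reduction from Gaussian to Bernoulli mean estimation: if `ν i = Erf(μ i / √2)`,
`ν̂ ∈ [-η, η]^d` with `η = Erf(1/√2)`, and `μ̂ i = √2 Erf⁻¹(ν̂ i)` (expressed by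
`erf (μ̂ i / √2) = ν̂ i`), then `‖μ - μ̂‖_p ≤ √(eπ/2) ‖ν - ν̂‖_p`. -/
theorem stmt_14 (d : ℕ) (p : ℝ) (hp : 1 ≤ p)
    (μ ν νhat μhat : Fin d → ℝ)
    (hμ : ∀ i, |μ i| ≤ 1)
    (hν : ∀ i, ν i = erf (μ i / Real.sqrt 2))
    (hνhat : ∀ i, |νhat i| ≤ erf (1 / Real.sqrt 2))
    (hμhat : ∀ i, erf (μhat i / Real.sqrt 2) = νhat i) :
    (∑ i, |μ i - μhat i| ^ p) ^ (1 / p) ≤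
      Real.sqrt (Real.exp 1 * Real.pi / 2) * (∑ i, |ν i - νhat i| ^ p) ^ (1 / p) := by
  have hp0 : (0:ℝ) < p := lt_of_lt_of_le one_pos hp
  set C := Real.sqrt (Real.exp 1 * Real.pi / 2) with hC
  have hC0 : (0:ℝ) ≤ C := Real.sqrt_nonneg _
  set c := 2 / Real.sqrt Real.pi * Real.exp (-(1/2)) with hc
  have hc0 : (0:ℝ) < c := by positivity
  have hr2 : (0:ℝ) < Real.sqrt 2 := Real.sqrt_pos.2 (by norm_num)
  have coord : ∀ i, |μ i - μhat i| ≤ C * |ν i - νhat i| := by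
    intro i
    have hx : |μ i / Real.sqrt 2| ≤ 1 / Real.sqrt 2 := by
      rw [abs_div, abs_of_pos hr2]
      exact div_le_div_of_nonneg_right (hμ i) hr2.le
    have hy : |μhat i / Real.sqrt 2| ≤ 1 / Real.sqrt 2 :=
      abs_le_of_erf _ _ (by rw [hμhat i]; exact hνhat i)
    have hkey := key _ _ hx hy
    rw [div_sub_div_same, abs_div, abs_of_pos hr2] at hkey
    have hkey2 : c * |μ i - μhat i| ≤ Real.sqrt 2 * |ν i - νhat i| := by
      have := mul_le_mul_of_nonneg_right hkey hr2.le
      rw [mul_assoc, div_mul_cancel₀ _ hr2.ne', mul_comm _ (Real.sqrt 2)] at this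
      rw [hν i, ← hμhat i, hc]
      exact this
    have h3 : Real.sqrt 2 * |μ i - μhat i| ≤ Real.sqrt 2 * (C * |ν i - νhat i|) := by
      calc Real.sqrt 2 * |μ i - μhat i| = C * (c * |μ i - μhat i|) := by
            rw [← mul_assoc, const_eq]
        _ ≤ C * (Real.sqrt 2 * |ν i - νhat i|) := mul_le_mul_of_nonneg_left hkey2 hC0
        _ = Real.sqrt 2 * (C * |ν i - νhat i|) := by ring
    exact le_of_mul_le_mul_left h3 hr2
  have sum1 : (0:ℝ) ≤ ∑ i, |ν i - νhat i| ^ p :=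
    Finset.sum_nonneg fun i _ => Real.rpow_nonneg (abs_nonneg _) p
  have hsum : (∑ i, |μ i - μhat i| ^ p) ≤ C ^ p * ∑ i, |ν i - νhat i| ^ p := by
    rw [Finset.mul_sum]
    apply Finset.sum_le_sum
    intro i _
    calc |μ i - μhat i| ^ p ≤ (C * |ν i - νhat i|) ^ p :=
          Real.rpow_le_rpow (abs_nonneg _) (coord i) hp0.le
      _ = C ^ p * |ν i - νhat i| ^ p := Real.mul_rpow hC0 (abs_nonneg _)
  calc (∑ i, |μ i - μhat i| ^ p) ^ (1 / p)
      ≤ (C ^ p * ∑ i, |ν i - νhat i| ^ p) ^ (1 / p) :=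
        Real.rpow_le_rpow (Finset.sum_nonneg fun i _ => Real.rpow_nonneg (abs_nonneg _) p)
          hsum (by positivity)
    _ = C * (∑ i, |ν i - νhat i| ^ p) ^ (1 / p) := by
        rw [Real.mul_rpow (Real.rpow_nonneg hC0 p) sum1, ← Real.rpow_mul hC0,
          mul_one_div, div_self hp0.ne', Real.rpow_one]
end
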